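/- Let c > 0, d > 0, r > 0, T > 0. Define K₀(x) = (1/(2r))·√(π/(2dc))·e^{−√(c/d)·|x|}, g(x) = (e^{−cT}/√(2dT))·e^{−x²/(4dT)}, erf(z) = (2/√π)·∫₀^z e^{−t²} dt, and φ(x) = (e^{√(c/d)·x}/2)·(1 + erf( −x/(2√(dT)) − √(cT) )). Then for every x ∈ ℝ, (1/√(2π)) ∫_ℝ K₀(x − y)·g(y) dy = (1/(2r))·√(π/(2dc))·( φ(x) + φ(−x) ). -/

import Mathlib

open MeasureTheory

/-- The Gauss error function. -/
noncomputable def erf (z : ℝ) : ℝ :=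
  (2 / Real.sqrt Real.pi) * ∫ t in (0 : ℝ)..z, Real.exp (-t ^ 2)

open Set Real in
lemma comp_affine_Iic (f : ℝ → ℝ) (b x s : ℝ) (hs : 0 < s) :
    ∫ y in Iic x, f ((y - b) / s) = s * ∫ u in Iic ((x - b) / s), f u := by
  rw [← integral_indicator measurableSet_Iic, ← integral_indicator measurableSet_Iic]
  have h1 : ∀ y : ℝ, (Iic x).indicator (fun y => f ((y - b) / s)) y
      = (fun u => (Iic ((x - b) / s)).indicator f (u / s)) (y - b) := by
    intro y
    by_cases h : y ≤ x
    · have h2 : y / s ≤ x / s := by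
        rw [div_le_div_iff_of_pos_right hs]; exact h
      simp [Set.indicator_apply, mem_Iic, h, h2, sub_div]
    · have h2 : ¬ (y / s ≤ x / s) := by
        rw [div_le_div_iff_of_pos_right hs]; exact h
      simp [Set.indicator_apply, mem_Iic, h, h2, sub_div]
  simp_rw [h1]
  rw [integral_sub_right_eq_self (fun u => (Iic ((x - b) / s)).indicator f (u / s)) b,
    MeasureTheory.Measure.integral_comp_div (fun u => (Iic ((x - b) / s)).indicator f u) s,
    abs_of_pos hs, smul_eq_mul]

open Set Real in
lemma int_gauss_Iic (m : ℝ) :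
    ∫ y in Iic m, Real.exp (-y ^ 2) = Real.sqrt Real.pi / 2 * (1 + erf m) := by
  have hint : Integrable (fun y : ℝ => Real.exp (-y ^ 2)) := by
    simpa using integrable_exp_neg_mul_sq (b := 1) one_pos
  have h0 : ∫ y in Iic (0:ℝ), Real.exp (-y ^ 2) = Real.sqrt Real.pi / 2 := by
    have : ∫ y in Iic (0:ℝ), Real.exp (-(-y) ^ 2) = ∫ y in Ioi (-(0:ℝ)), Real.exp (-y ^ 2) :=
      integral_comp_neg_Iic 0 (fun y => Real.exp (-y ^ 2))
    simp only [neg_neg, neg_zero, even_two.neg_pow] at this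
    rw [this]
    simpa using integral_gaussian_Ioi 1
  have hsub := intervalIntegral.integral_Iic_sub_Iic (μ := volume)
    (f := fun y : ℝ => Real.exp (-y ^ 2)) (a := 0) (b := m)
    hint.integrableOn hint.integrableOn
  rw [h0] at hsub
  have herf : ∫ t in (0:ℝ)..m, Real.exp (-t ^ 2) = Real.sqrt Real.pi / 2 * erf m := by
    rw [erf]
    have hpi : Real.sqrt Real.pi ≠ 0 := by positivity
    field_simp
  rw [herf] at hsub
  linarith

open Set Real in
theorem stmt17 (c d r T : ℝ) (hc : 0 < c) (hd : 0 < d) (hr : 0 < r) (hT : 0 < T)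
    (K₀ g φ : ℝ → ℝ)
    (hK₀ : ∀ x : ℝ, K₀ x =
      (1 / (2 * r)) * Real.sqrt (Real.pi / (2 * d * c)) * Real.exp (-Real.sqrt (c / d) * |x|))
    (hg : ∀ x : ℝ, g x =
      (Real.exp (-(c * T)) / Real.sqrt (2 * d * T)) * Real.exp (-(x ^ 2 / (4 * d * T))))
    (hφ : ∀ x : ℝ, φ x =
      (Real.exp (Real.sqrt (c / d) * x) / 2) *
        (1 + erf (-(x / (2 * Real.sqrt (d * T))) - Real.sqrt (c * T)))) :
    ∀ x : ℝ,
      (1 / Real.sqrt (2 * Real.pi)) * ∫ y : ℝ, K₀ (x - y) * g y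
        = (1 / (2 * r)) * Real.sqrt (Real.pi / (2 * d * c)) * (φ x + φ (-x)) := by
  intro x
  set a : ℝ := Real.sqrt (c / d) with ha_def
  set w : ℝ := Real.sqrt (d * T) with hw_def
  have hw : 0 < w := Real.sqrt_pos.mpr (by positivity)
  have ha : 0 < a := Real.sqrt_pos.mpr (by positivity)
  set s : ℝ := 2 * w with hs_def
  have hs : 0 < s := by positivity
  set b : ℝ := 2 * a * d * T with hb_def
  have hw2 : w ^ 2 = d * T := Real.sq_sqrt (by positivity)
  have hss : s ^ 2 = 4 * (d * T) := by rw [hs_def, mul_pow, hw2]; ring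
  have ha2 : a ^ 2 = c / d := Real.sq_sqrt (by positivity)
  have hca : c = a ^ 2 * d := by rw [ha2]; field_simp
  have hbs : b / s = Real.sqrt (c * T) := by
    have h1 : b / s = a * w := by
      rw [hb_def, hs_def]
      field_simp
      nlinarith [hw2]

    rw [h1, ha_def, hw_def, ← Real.sqrt_mul (by positivity : (0:ℝ) ≤ c / d)]
    congr 1
    field_simp
  set C1 : ℝ := (1 / (2 * r)) * Real.sqrt (Real.pi / (2 * d * c)) with hC1_def
  set C2 : ℝ := Real.exp (-(c * T)) / Real.sqrt (2 * d * T) with hC2_def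
  set h : ℝ → ℝ := fun y => Real.exp (-a * |x - y|) * Real.exp (-(y ^ 2 / (4 * d * T)))
    with hh_def
  -- integrability
  have hgint : Integrable (fun y : ℝ => Real.exp (-(1 / (4 * d * T)) * y ^ 2)) :=
    integrable_exp_neg_mul_sq (by positivity)
  have hcont : Continuous h := by
    apply Continuous.mul <;> fun_prop
  have hInt : Integrable h := by
    refine hgint.mono hcont.aestronglyMeasurable (Filter.Eventually.of_forall fun y => ?_)
    rw [Real.norm_eq_abs, Real.norm_eq_abs, abs_of_pos (by positivity),
      abs_of_pos (Real.exp_pos _)]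
    have h1 : Real.exp (-a * |x - y|) ≤ 1 := Real.exp_le_one_iff.mpr (by nlinarith [abs_nonneg (x - y), ha.le])
    have h2 : Real.exp (-(y ^ 2 / (4 * d * T))) = Real.exp (-(1 / (4 * d * T)) * y ^ 2) := by
      congr 1; ring
    calc h y ≤ Real.exp (-(y ^ 2 / (4 * d * T))) := by
          rw [hh_def]
          exact mul_le_of_le_one_left (Real.exp_pos _).le h1
      _ = _ := h2
  -- piece 1 : Iic
  have hP1 : ∫ y in Iic x, h y
      = Real.exp (c * T) * Real.exp (-(a * x)) *
        (s * (Real.sqrt Real.pi / 2 * (1 + erf ((x - b) / s)))) := by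
    have hpt : ∀ y ∈ Iic x, h y
        = (Real.exp (c * T) * Real.exp (-(a * x))) * Real.exp (-(((y - b) / s) ^ 2)) := by
      intro y hy
      rw [mem_Iic] at hy
      rw [hh_def]
      simp only
      rw [abs_of_nonneg (by linarith : (0:ℝ) ≤ x - y), ← Real.exp_add, ← Real.exp_add,
        ← Real.exp_add]
      congr 1
      rw [div_pow, hss, hca, hb_def]
      have hdT : d * T ≠ 0 := by positivity
      field_simp
      ring
    rw [setIntegral_congr_fun measurableSet_Iic hpt, integral_const_mul,
      comp_affine_Iic (fun u => Real.exp (-u ^ 2)) b x s hs, int_gauss_Iic]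
  -- piece 2 : Ioi
  have hP2 : ∫ y in Ioi x, h y
      = Real.exp (c * T) * Real.exp (a * x) *
        (s * (Real.sqrt Real.pi / 2 * (1 + erf ((-x - b) / s)))) := by
    have hpt : ∀ y ∈ Ioi x, h y
        = (Real.exp (c * T) * Real.exp (a * x)) *
          (fun u => Real.exp (-(((u - b) / s) ^ 2))) (-y) := by
      intro y hy
      rw [mem_Ioi] at hy
      rw [hh_def]
      simp only
      rw [abs_of_nonpos (by linarith : x - y ≤ 0), ← Real.exp_add, ← Real.exp_add,
        ← Real.exp_add]
      congr 1
      rw [div_pow, hss, hca, hb_def]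
      have hdT : d * T ≠ 0 := by positivity
      field_simp
      ring
    rw [setIntegral_congr_fun measurableSet_Ioi hpt, integral_const_mul,
      integral_comp_neg_Ioi x (fun u => Real.exp (-(((u - b) / s) ^ 2))),
      comp_affine_Iic (fun u => Real.exp (-u ^ 2)) b (-x) s hs, int_gauss_Iic]
  -- assemble
  have hsplit : ∫ y : ℝ, h y = (∫ y in Iic x, h y) + ∫ y in Ioi x, h y :=
    (intervalIntegral.integral_Iic_add_Ioi hInt.integrableOn hInt.integrableOn).symm
  have hre : ∫ y : ℝ, K₀ (x - y) * g y = (C1 * C2) * ∫ y : ℝ, h y := by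
    rw [← integral_const_mul]
    congr 1
    funext y
    rw [hK₀, hg, hh_def]
    ring
  -- erf argument rewriting
  have harg1 : (x - b) / s = -(-x / s) - Real.sqrt (c * T) := by
    rw [← hbs]; ring
  have harg2 : (-x - b) / s = -(x / s) - Real.sqrt (c * T) := by
    rw [← hbs]; ring
  -- final scalar identity
  have h2π : Real.sqrt (2 * Real.pi) = Real.sqrt 2 * Real.sqrt Real.pi :=
    Real.sqrt_mul (by norm_num) _
  have h2dT : Real.sqrt (2 * d * T) = Real.sqrt 2 * w := by
    rw [mul_assoc, hw_def]; exact Real.sqrt_mul (by norm_num) _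
  have hs2 : Real.sqrt 2 * Real.sqrt 2 = 2 := Real.mul_self_sqrt (by norm_num)
  have hπ0 : Real.sqrt Real.pi ≠ 0 := by positivity
  have h20 : Real.sqrt 2 ≠ 0 := by positivity
  have hexp1 : Real.exp (-(c * T)) * Real.exp (c * T) = 1 := by
    rw [← Real.exp_add]; simp
  have hconst : (1 / Real.sqrt (2 * Real.pi)) * C2 * Real.exp (c * T) * s *
      (Real.sqrt Real.pi / 2) = 1 / 2 := by
    rw [hC2_def, h2π, h2dT, hs_def]
    field_simp
    linear_combination 2 * hexp1 - hs2
  rw [hre, hsplit, hP1, hP2, hφ x, hφ (-x)]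
  rw [harg1, harg2]
  have hax : a * -x = -(a * x) := by ring
  rw [hax]
  linear_combination
    (C1 * (Real.exp (-(a * x)) * (1 + erf (-(-x / s) - Real.sqrt (c * T))) +
      Real.exp (a * x) * (1 + erf (-(x / s) - Real.sqrt (c * T))))) * hconst
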